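/- Let A be an associative unital C-algebra and D a derivation of A. Let F be a formal group over C with logarithm f. Define Y_F(a,x)b = (e^{f(x)D} a)·b for a,b ∈ A. Then (A, Y_F, 1) is a nonlocal vertex F-algebra, and it is a vertex F-algebra if and only if A is commutative. -/

import Mathlib

open scoped Classical
noncomputable section


/-! ### Substitution machinery for (multivariable) formal power series -/

variable {R : Type*} [CommRing R] {σ : Type*}

/-- Build a multivariate power series from its coefficient function. -/
def mvmk (f : (σ →₀ ℕ) → R) : MvPowerSeries σ R := f

/-- Total degree of a monomial exponent. -/
def wt (d : σ →₀ ℕ) : ℕ := d.sum fun _ n => n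

/-- Substitution `f(u)` of a multivariate series `u` with zero constant term into a
one-variable power series `f`. -/
def pcompMv (f : PowerSeries R) (u : MvPowerSeries σ R) : MvPowerSeries σ R :=
  mvmk fun d => MvPowerSeries.coeff (R := R) d
    (∑ k ∈ Finset.range (wt d + 1), MvPowerSeries.C (σ := σ) (R := R) (PowerSeries.coeff (R := R) k f) * u ^ k)

/-- Composition `f(g)` of one-variable power series, for `g` with zero constant term. -/
def pcomp (f g : PowerSeries R) : PowerSeries R :=
  PowerSeries.mk fun n => PowerSeries.coeff (R := R) n
    (∑ k ∈ Finset.range (n + 1), PowerSeries.C (R := R) (PowerSeries.coeff (R := R) k f) * g ^ k)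

/-- Substitution `F(a,b)` of two series with zero constant term into a two-variable series. -/
def subst2 (F : MvPowerSeries (Fin 2) R) (a b : MvPowerSeries σ R) : MvPowerSeries σ R :=
  mvmk fun d => MvPowerSeries.coeff (R := R) d
    (∑ p ∈ Finset.range (wt d + 1) ×ˢ Finset.range (wt d + 1),
      MvPowerSeries.C (σ := σ) (R := R)
          (MvPowerSeries.coeff (R := R) (Finsupp.single (0 : Fin 2) p.1 + Finsupp.single (1 : Fin 2) p.2) F)
        * a ^ p.1 * b ^ p.2)

/-- The one-variable power series `f` viewed in variable `i` of a two-variable ring. -/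
def toMv (i : Fin 2) (f : PowerSeries R) : MvPowerSeries (Fin 2) R :=
  mvmk fun d => if d = Finsupp.single i (d i) then PowerSeries.coeff (R := R) (d i) f else 0

/-- `F` is a one-dimensional formal group law: `F(x,0)=x`, `F(0,y)=y`,
`F(x,F(y,z))=F(F(x,y),z)`. -/
def IsFGL (F : MvPowerSeries (Fin 2) R) : Prop :=
  subst2 F (MvPowerSeries.X 0) 0 = (MvPowerSeries.X 0 : MvPowerSeries (Fin 2) R) ∧
  subst2 F 0 (MvPowerSeries.X 1) = (MvPowerSeries.X 1 : MvPowerSeries (Fin 2) R) ∧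
  subst2 F (MvPowerSeries.X 0) (subst2 F (MvPowerSeries.X 1) (MvPowerSeries.X 2)) =
    subst2 F (subst2 F (MvPowerSeries.X 0) (MvPowerSeries.X 1))
      (MvPowerSeries.X 2 : MvPowerSeries (Fin 3) R)

/-! ### Laurent series machinery -/

/-- The Laurent series variable `x`. -/
def xL : LaurentSeries ℂ := HahnSeries.single 1 1

theorem isPWO_Ici (a : ℤ) : (Set.Ici a).IsPWO := by
  have h : Set.Ici a = (fun n : ℕ => a + n) '' Set.univ := by
    ext n
    simp only [Set.mem_Ici, Set.mem_image, Set.mem_univ, true_and]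
    constructor
    · intro h; exact ⟨(n - a).toNat, by omega⟩
    · rintro ⟨m, rfl⟩; omega
  rw [h]
  exact ((Set.isWF_univ_iff.2 (inferInstance : WellFoundedLT ℕ)).isPWO).image_of_monotone
    (fun x y hxy => by omega)

/-- Substitution `c(g)` of a Laurent series `g` of order one into a Laurent series `c`,
defined coefficientwise (using `zpow` in the field of Laurent series). -/
def lsubst (g c : LaurentSeries ℂ) : LaurentSeries ℂ :=
  { coeff := fun a => ∑ m ∈ Finset.Icc c.order a, c.coeff m * (g ^ m).coeff a
    isPWO_support' := (isPWO_Ici c.order).mono (by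
      intro a ha
      simp only [Function.mem_support] at ha
      by_contra hc
      simp only [Set.mem_Ici, not_le] at hc
      rw [Finset.Icc_eq_empty (by omega), Finset.sum_empty] at ha
      exact ha rfl) }

/-- Formal derivative `d/dx` of a Laurent series. -/
def lderiv (c : LaurentSeries ℂ) : LaurentSeries ℂ :=
  { coeff := fun a => (a + 1 : ℤ) • c.coeff (a + 1)
    isPWO_support' := (c.isPWO_support.image_of_monotone
        (f := fun m => m - 1) (fun x y h => by dsimp only; omega)).mono (by
      intro a ha
      simp only [Function.mem_support] at ha
      refine ⟨a + 1, ?_, by ring⟩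
      intro h0
      exact ha (by rw [h0, smul_zero])) }

/-- `j`-th Hasse derivative `(1/j!) (d/dx)^j` of a Laurent series. -/
def hasse (j : ℕ) (c : LaurentSeries ℂ) : LaurentSeries ℂ := ((Nat.factorial j : ℂ))⁻¹ • lderiv^[j] c

/-- Taylor-expansion substitution `φ(ψ, w)`: substitute `ψ` (whose constant term in the
`z`-variables is `x`) for `x` and `w` (zero constant term) for `z` in
`φ(x,z) = Σ c_n(x) zⁿ`, via `c_n(ψ) = Σ_j (hasse_j c_n)(x) (ψ - x)^j`. -/
def fullComp (φ : PowerSeries (LaurentSeries ℂ)) (ψ w : MvPowerSeries (Fin 2) (LaurentSeries ℂ)) :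
    MvPowerSeries (Fin 2) (LaurentSeries ℂ) :=
  mvmk fun d => MvPowerSeries.coeff (R := (LaurentSeries ℂ)) d
    (∑ n ∈ Finset.range (wt d + 1), ∑ j ∈ Finset.range (wt d + 1),
      MvPowerSeries.C (σ := (Fin 2)) (R := (LaurentSeries ℂ)) (hasse j (PowerSeries.coeff (R := (LaurentSeries ℂ)) n φ))
        * (ψ - MvPowerSeries.C (σ := (Fin 2)) (R := (LaurentSeries ℂ)) xL) ^ j * w ^ n)

/-- `φ(x,z) ∈ ℂ((x))[[z]]` is an associate of the formal group law `F`: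
`φ(x,0) = x` and `φ(φ(x,z₁),z₂) = φ(x,F(z₁,z₂))`. -/
def IsAssoc (F : MvPowerSeries (Fin 2) ℂ) (φ : PowerSeries (LaurentSeries ℂ)) : Prop :=
  PowerSeries.constantCoeff (R := (LaurentSeries ℂ)) φ = xL ∧
  fullComp φ (toMv 0 φ) (MvPowerSeries.X 1) =
    fullComp φ (MvPowerSeries.C (σ := (Fin 2)) (R := (LaurentSeries ℂ)) xL)
      (MvPowerSeries.map (σ := Fin 2) (HahnSeries.C : ℂ →+* LaurentSeries ℂ) F)

/-- Application of a one-variable series `c` (as a Laurent series) to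
`ψ ∈ ℂ((x))[[z]]` whose constant term is the base point `w`, by Taylor expansion at `w`. -/
def acompAt (c w : LaurentSeries ℂ) (ψ : PowerSeries (LaurentSeries ℂ)) :
    PowerSeries (LaurentSeries ℂ) :=
  PowerSeries.mk fun n => PowerSeries.coeff (R := (LaurentSeries ℂ)) n
    (∑ j ∈ Finset.range (n + 1),
      PowerSeries.C (R := (LaurentSeries ℂ)) (lsubst w (hasse j c)) *
        (ψ - PowerSeries.C (R := (LaurentSeries ℂ)) w) ^ j)




/-! ### Vertex-algebra machinery -/

/-- `F(x₀,x₂)` viewed in `ℂ((x₀))[[x₂]]`. -/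
def FB (F : MvPowerSeries (Fin 2) ℂ) : PowerSeries (LaurentSeries ℂ) :=
  PowerSeries.mk fun j => HahnSeries.ofPowerSeries ℤ ℂ
    (PowerSeries.mk fun i =>
      MvPowerSeries.coeff (R := ℂ) (Finsupp.single (0 : Fin 2) i + Finsupp.single (1 : Fin 2) j) F)

/-- Integer power `F(x₀,x₂)^k` computed in `ℂ((x₀))[[x₂]]` (negative powers via
`Ring.inverse`, which is the genuine inverse whenever `F(x,0)=x`). -/
def Fzp (F : MvPowerSeries (Fin 2) ℂ) (k : ℤ) : PowerSeries (LaurentSeries ℂ) :=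
  if 0 ≤ k then (FB F) ^ k.toNat else (Ring.inverse (FB F)) ^ (-k).toNat

/-- The coefficient of `x₀^a x₂^c` in `F(x₀,x₂)^k ∈ ℂ((x₀))[[x₂]]`. -/
def FzC (F : MvPowerSeries (Fin 2) ℂ) (k : ℤ) (a c : ℤ) : ℂ :=
  if 0 ≤ c then (PowerSeries.coeff (R := (LaurentSeries ℂ)) c.toNat (Fzp F k)).coeff a else 0

variable {V : Type*} [AddCommGroup V] [Module ℂ V]

/-- Vacuum property: `Y(𝟙,x)v = v`. -/
def Vacuum (Y : V → V → HahnSeries ℤ V) (vac : V) : Prop :=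
  ∀ v, Y vac v = HahnSeries.single 0 v

/-- Creation property: `Y(v,x)𝟙 ∈ V[[x]]` with constant term `v`.
(Here `(Y u v).coeff a` is the coefficient of `x^a` in `Y(u,x)v`.) -/
def Creation (Y : V → V → HahnSeries ℤ V) (vac : V) : Prop :=
  ∀ v, (∀ n : ℤ, n < 0 → (Y v vac).coeff n = 0) ∧ (Y v vac).coeff 0 = v

/-- Weak `F`-associativity: for all `u,v,w` there is `l` with
`F(x₀,x₂)^l Y(u,F(x₀,x₂))Y(v,x₂)w = F(x₀,x₂)^l Y(Y(u,x₀)v,x₂)w`,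
expressed through coefficients of `x₀^a x₂^b`. -/
def WeakFAssoc (F : MvPowerSeries (Fin 2) ℂ) (Y : V → V → HahnSeries ℤ V) : Prop :=
  ∀ u v w : V, ∃ l : ℕ, ∀ a b : ℤ,
    (∑ᶠ mn : ℤ × ℤ, FzC F ((l : ℤ) + mn.1) a (b - mn.2) • (Y u ((Y v w).coeff mn.2)).coeff mn.1)
    = ∑ᶠ mn : ℤ × ℤ, FzC F (l : ℤ) (a - mn.1) (b - mn.2) • (Y ((Y u v).coeff mn.1) w).coeff mn.2

/-- Weak commutativity: for all `u,v` there is `k` with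
`(x₁-x₂)^k Y(u,x₁)Y(v,x₂) = (x₁-x₂)^k Y(v,x₂)Y(u,x₁)`, in coefficients of `x₁^a x₂^b`. -/
def WeakComm (Y : V → V → HahnSeries ℤ V) : Prop :=
  ∀ u v : V, ∃ k : ℕ, ∀ (w : V) (a b : ℤ),
    (∑ i ∈ Finset.range (k + 1),
      ((-1 : ℂ) ^ (k - i) * (k.choose i : ℂ)) •
        (Y u ((Y v w).coeff (b - (k - i)))).coeff (a - i))
    = ∑ i ∈ Finset.range (k + 1),
      ((-1 : ℂ) ^ (k - i) * (k.choose i : ℂ)) •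
        (Y v ((Y u w).coeff (a - i))).coeff (b - (k - i))

/-! ### Products of fields in two variables (for Lemma on `g(x₁)-g(x₂)`) -/

variable {W : Type*} [AddCommGroup W] [Module ℂ W]

/-- Coefficient of `x₁^m x₂^n` in `q(x₁,x₂)·a(x₁)b(x₂)w`. -/
def prodCoeff (q : MvPowerSeries (Fin 2) ℂ) (a b : W →ₗ[ℂ] HahnSeries ℤ W) (w : W)
    (m n : ℤ) : W :=
  ∑ᶠ ij : ℕ × ℕ,
    MvPowerSeries.coeff (R := ℂ) (Finsupp.single (0 : Fin 2) ij.1 + Finsupp.single (1 : Fin 2) ij.2) q •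
      (a ((b w).coeff (n - ij.2))).coeff (m - ij.1)

/-- Coefficient of `x₁^m x₂^n` in `q(x₁,x₂)·b(x₂)a(x₁)w`. -/
def prodCoeff' (q : MvPowerSeries (Fin 2) ℂ) (a b : W →ₗ[ℂ] HahnSeries ℤ W) (w : W)
    (m n : ℤ) : W :=
  ∑ᶠ ij : ℕ × ℕ,
    MvPowerSeries.coeff (R := ℂ) (Finsupp.single (0 : Fin 2) ij.1 + Finsupp.single (1 : Fin 2) ij.2) q •
      (b ((a w).coeff (m - ij.1))).coeff (n - ij.2)

/-- Membership in `Hom(W, W((x₁,x₂)))` for the two-variable coefficient family. -/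
def MemHom2 (q : MvPowerSeries (Fin 2) ℂ) (a b : W →ₗ[ℂ] HahnSeries ℤ W) : Prop :=
  ∀ w : W, ∃ N : ℕ, ∀ m n : ℤ, (m < -(N : ℤ) ∨ n < -(N : ℤ)) → prodCoeff q a b w m n = 0



namespace VFAaux
open Finset

lemma wt_single (i : σ) (n : ℕ) : wt (Finsupp.single i n) = n := by
  simp [wt, Finsupp.sum_single_index]

lemma wt_add (d e : σ →₀ ℕ) : wt (d + e) = wt d + wt e := by
  simp [wt, Finsupp.sum_add_index']

lemma wt_eq_degree (d : σ →₀ ℕ) : wt d = d.degree := rfl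

lemma coeff_upow_eq_zero {u : MvPowerSeries σ ℂ} (hu : MvPowerSeries.constantCoeff (σ := σ) (R := ℂ) u = 0)
    {d : σ →₀ ℕ} {k : ℕ} (hk : wt d < k) : MvPowerSeries.coeff (R := ℂ) d (u ^ k) = 0 := by
  apply MvPowerSeries.coeff_eq_zero_of_constantCoeff_nilpotent (m := 1) (by simpa using hu)
  rw [← wt_eq_degree]; omega

lemma coeff_pcompMv (g : PowerSeries ℂ) (u : MvPowerSeries σ ℂ)
    (hu : MvPowerSeries.constantCoeff (σ := σ) (R := ℂ) u = 0) (d : σ →₀ ℕ) {N : ℕ} (hN : wt d ≤ N) :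
    MvPowerSeries.coeff (R := ℂ) d (pcompMv g u)
      = ∑ k ∈ range (N + 1), PowerSeries.coeff (R := ℂ) k g * MvPowerSeries.coeff (R := ℂ) d (u ^ k) := by
  have h0 : MvPowerSeries.coeff (R := ℂ) d (pcompMv g u)
      = ∑ k ∈ range (wt d + 1), PowerSeries.coeff (R := ℂ) k g * MvPowerSeries.coeff (R := ℂ) d (u ^ k) := by
    show MvPowerSeries.coeff (R := ℂ) d (∑ k ∈ range (wt d + 1), _) = _
    rw [map_sum]
    exact Finset.sum_congr rfl fun k _ => by rw [MvPowerSeries.coeff_C_mul]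
  rw [h0]
  apply Finset.sum_subset (by intro x hx; simp only [mem_range] at *; omega)
  intro k _ hk
  simp only [mem_range] at hk
  rw [coeff_upow_eq_zero hu (by omega), mul_zero]

lemma diag_sum (G : ℕ × ℕ → ℂ) (N : ℕ) (hG : ∀ p : ℕ × ℕ, N < p.1 + p.2 → G p = 0) :
    ∑ k ∈ range (N + 1), ∑ p ∈ antidiagonal k, G p
      = ∑ p ∈ range (N + 1) ×ˢ range (N + 1), G p := by
  rw [← Finset.sum_biUnion]
  · apply Finset.sum_subset
    · intro p hp
      simp only [mem_biUnion, mem_range, Finset.HasAntidiagonal.mem_antidiagonal] at hp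
      obtain ⟨k, hk, hpk⟩ := hp
      simp only [mem_product, mem_range]; omega
    · intro p hp hnp
      by_cases h : N < p.1 + p.2
      · exact hG p h
      · exfalso; apply hnp
        simp only [mem_biUnion, mem_range, Finset.HasAntidiagonal.mem_antidiagonal]
        exact ⟨p.1 + p.2, by omega, rfl⟩
  · intro i _ j _ hij
    simp only [Finset.disjoint_left, Finset.HasAntidiagonal.mem_antidiagonal]
    intro p hp hq; omega

lemma pcompMv_mul (g h : PowerSeries ℂ) (u : MvPowerSeries σ ℂ)
    (hu : MvPowerSeries.constantCoeff (σ := σ) (R := ℂ) u = 0) :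
    pcompMv (g * h) u = pcompMv g u * pcompMv h u := by
  ext d
  rw [coeff_pcompMv _ _ hu d (le_refl _), MvPowerSeries.coeff_mul]
  have hrhs : ∀ p : (σ →₀ ℕ) × (σ →₀ ℕ), p ∈ antidiagonal d →
      MvPowerSeries.coeff (R := ℂ) p.1 (pcompMv g u) * MvPowerSeries.coeff (R := ℂ) p.2 (pcompMv h u)
      = ∑ q ∈ range (wt d + 1) ×ˢ range (wt d + 1),
          (PowerSeries.coeff (R := ℂ) q.1 g * MvPowerSeries.coeff (R := ℂ) p.1 (u ^ q.1)) *
          (PowerSeries.coeff (R := ℂ) q.2 h * MvPowerSeries.coeff (R := ℂ) p.2 (u ^ q.2)) := by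
    intro p hp
    rw [Finset.HasAntidiagonal.mem_antidiagonal] at hp
    have h1 : wt p.1 ≤ wt d := by rw [← hp, wt_add]; omega
    have h2 : wt p.2 ≤ wt d := by rw [← hp, wt_add]; omega
    rw [coeff_pcompMv _ _ hu _ h1, coeff_pcompMv _ _ hu _ h2, Finset.sum_mul_sum]
    rw [Finset.sum_product]
  rw [Finset.sum_congr rfl hrhs, Finset.sum_comm]
  have hlhs : ∀ k ∈ range (wt d + 1),
      PowerSeries.coeff (R := ℂ) k (g * h) * MvPowerSeries.coeff (R := ℂ) d (u ^ k)
      = ∑ q ∈ antidiagonal k, (PowerSeries.coeff (R := ℂ) q.1 g * PowerSeries.coeff (R := ℂ) q.2 h)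
          * MvPowerSeries.coeff (R := ℂ) d (u ^ (q.1 + q.2)) := by
    intro k _
    rw [PowerSeries.coeff_mul, Finset.sum_mul]
    apply Finset.sum_congr rfl
    intro q hq
    rw [Finset.HasAntidiagonal.mem_antidiagonal] at hq
    rw [← hq]
  rw [Finset.sum_congr rfl hlhs]
  rw [diag_sum (fun q => (PowerSeries.coeff (R := ℂ) q.1 g * PowerSeries.coeff (R := ℂ) q.2 h)
      * MvPowerSeries.coeff (R := ℂ) d (u ^ (q.1 + q.2))) (wt d)
    (fun p hp => by beta_reduce; rw [coeff_upow_eq_zero hu hp, mul_zero])]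
  apply Finset.sum_congr rfl
  intro q _
  rw [pow_add, MvPowerSeries.coeff_mul, Finset.mul_sum]
  apply Finset.sum_congr rfl
  intro p _
  ring


end VFAaux

namespace VFAaux2
open Finset VFAaux

lemma pcompMv_one (u : MvPowerSeries σ ℂ) (hu : MvPowerSeries.constantCoeff (σ := σ) (R := ℂ) u = 0) :
    pcompMv 1 u = 1 := by
  ext d
  rw [coeff_pcompMv _ _ hu d (le_refl _)]
  rw [Finset.sum_eq_single 0]
  · simp
  · intro k _ hk
    rw [PowerSeries.coeff_one, if_neg hk, zero_mul]
  · intro h; simp at h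

lemma pcompMv_pow (g : PowerSeries ℂ) (u : MvPowerSeries σ ℂ)
    (hu : MvPowerSeries.constantCoeff (σ := σ) (R := ℂ) u = 0) (k : ℕ) :
    pcompMv (g ^ k) u = (pcompMv g u) ^ k := by
  induction k with
  | zero => simpa using pcompMv_one u hu
  | succ k ih => rw [pow_succ, pow_succ, pcompMv_mul _ _ _ hu, ih]

lemma toMv_eq (i : Fin 2) (g : PowerSeries ℂ) : toMv i g = pcompMv g (MvPowerSeries.X i) := by
  ext d
  rw [coeff_pcompMv _ _ (by simp) d (le_refl _)]
  show (if d = Finsupp.single i (d i) then PowerSeries.coeff (R := ℂ) (d i) g else 0) = _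
  have hc : ∀ k, MvPowerSeries.coeff (R := ℂ) d ((MvPowerSeries.X i : MvPowerSeries (Fin 2) ℂ) ^ k)
      = if d = Finsupp.single i k then 1 else 0 := by
    intro k
    rw [MvPowerSeries.coeff_X_pow]
  by_cases hd : d = Finsupp.single i (d i)
  · rw [if_pos hd, Finset.sum_eq_single (d i)]
    · rw [hc, if_pos hd, mul_one]
    · intro k _ hk
      rw [hc, if_neg, mul_zero]
      intro h
      apply hk
      have := congrArg (fun e => e i) h
      simpa using this.symm
    · intro h
      exfalso; apply h
      rw [mem_range]
      have : d i ≤ wt d := by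
        conv_rhs => rw [hd]
        rw [wt_single]
      omega
  · rw [if_neg hd]
    symm
    apply Finset.sum_eq_zero
    intro k _
    rw [hc, if_neg, mul_zero]
    intro h
    apply hd
    have := congrArg (fun e => e i) h
    rw [h]
    simp

lemma cross_coeff (g h : PowerSeries ℂ) (A c : ℕ) :
    MvPowerSeries.coeff (R := ℂ) (Finsupp.single (0 : Fin 2) A + Finsupp.single (1 : Fin 2) c)
        (toMv 0 g * toMv 1 h) = PowerSeries.coeff (R := ℂ) A g * PowerSeries.coeff (R := ℂ) c h := by
  classical
  rw [MvPowerSeries.coeff_mul]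
  have key0 : (Finsupp.single (0 : Fin 2) A + Finsupp.single (1 : Fin 2) c) 0 = A := by simp
  have key1 : (Finsupp.single (0 : Fin 2) A + Finsupp.single (1 : Fin 2) c) 1 = c := by simp
  rw [Finset.sum_eq_single (Finsupp.single (0 : Fin 2) A, Finsupp.single (1 : Fin 2) c)]
  · show (if _ then _ else _) * (if _ then _ else _) = _
    rw [if_pos (by simp), if_pos (by simp)]
    simp
  · rintro ⟨p, q⟩ hmem hne
    rw [Finset.HasAntidiagonal.mem_antidiagonal] at hmem
    show (if p = Finsupp.single 0 (p 0) then _ else _) * (if q = Finsupp.single 1 (q 1) then _ else _) = 0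
    by_cases h1 : p = Finsupp.single 0 (p 0)
    · by_cases h2 : q = Finsupp.single 1 (q 1)
      · exfalso
        apply hne
        have e0 : p 0 + q 0 = A := by
          have := congrArg (fun e => e (0 : Fin 2)) hmem
          simpa using this
        have e1 : p 1 + q 1 = c := by
          have := congrArg (fun e => e (1 : Fin 2)) hmem
          simpa using this
        have hq0 : q 0 = 0 := by rw [h2]; simp [Finsupp.single_apply]
        have hp1 : p 1 = 0 := by rw [h1]; simp [Finsupp.single_apply]
        have hpA : p 0 = A := by omega
        have hqc : q 1 = c := by omega
        ext
        · rw [h1, hpA]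
        · rw [h2, hqc]
      · rw [if_neg h2, mul_zero]
    · rw [if_neg h1, zero_mul]
  · intro hmem
    exfalso; apply hmem
    rw [Finset.HasAntidiagonal.mem_antidiagonal]

end VFAaux2

namespace VFAaux3
open Finset VFAaux VFAaux2

def gam (F : MvPowerSeries (Fin 2) ℂ) (m A c : ℕ) : ℂ :=
  MvPowerSeries.coeff (R := ℂ) (Finsupp.single (0 : Fin 2) A + Finsupp.single (1 : Fin 2) c) (F ^ m)

lemma constF_zero {F : MvPowerSeries (Fin 2) ℂ} (hF : IsFGL F) :
    MvPowerSeries.constantCoeff (σ := Fin 2) (R := ℂ) F = 0 := by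
  have h := congrArg (MvPowerSeries.coeff (R := ℂ) (0 : Fin 2 →₀ ℕ)) hF.1
  have hwt : wt (0 : Fin 2 →₀ ℕ) = 0 := by simp [wt]
  have h1 : MvPowerSeries.coeff (R := ℂ) (0 : Fin 2 →₀ ℕ) (subst2 F (MvPowerSeries.X 0) 0)
      = MvPowerSeries.constantCoeff (σ := Fin 2) (R := ℂ) F := by
    show MvPowerSeries.coeff (R := ℂ) (0 : Fin 2 →₀ ℕ)
      (∑ p ∈ Finset.range (wt (0 : Fin 2 →₀ ℕ) + 1) ×ˢ Finset.range (wt (0 : Fin 2 →₀ ℕ) + 1), _) = _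
    rw [hwt]
    simp [Finset.sum_product, MvPowerSeries.coeff_zero_C]
  rw [h1] at h
  simpa using h

lemma gam_eq_zero {F : MvPowerSeries (Fin 2) ℂ} (hF0 : MvPowerSeries.constantCoeff (σ := Fin 2) (R := ℂ) F = 0)
    {m A c : ℕ} (h : A + c < m) : gam F m A c = 0 := by
  apply coeff_upow_eq_zero hF0
  rw [wt_add, wt_single, wt_single]; exact h

lemma coeff_fpow_zero {f : PowerSeries ℂ} (hf0 : PowerSeries.constantCoeff (R := ℂ) f = 0)
    {k n : ℕ} (h : n < k) : PowerSeries.coeff (R := ℂ) n (f ^ k) = 0 :=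
  PowerSeries.X_pow_dvd_iff.mp (pow_dvd_pow_of_dvd (PowerSeries.X_dvd_iff.mpr hf0) k) n h

lemma star {F : MvPowerSeries (Fin 2) ℂ} {f : PowerSeries ℂ}
    (hF0 : MvPowerSeries.constantCoeff (σ := Fin 2) (R := ℂ) F = 0)
    (hlog : pcompMv f F = toMv 0 f + toMv 1 f)
    (k A c : ℕ) {M : ℕ} (hM : A + c ≤ M) :
    ∑ m ∈ range (M + 1), PowerSeries.coeff (R := ℂ) m (f ^ k) * gam F m A c
      = ∑ q ∈ range (k + 1),
          (k.choose q : ℂ) * PowerSeries.coeff (R := ℂ) A (f ^ q) * PowerSeries.coeff (R := ℂ) c (f ^ (k - q)) := by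
  have hwt : wt (Finsupp.single (0 : Fin 2) A + Finsupp.single (1 : Fin 2) c) = A + c := by
    rw [wt_add, wt_single, wt_single]
  have hL : ∑ m ∈ range (M + 1), PowerSeries.coeff (R := ℂ) m (f ^ k) * gam F m A c
      = MvPowerSeries.coeff (R := ℂ) (Finsupp.single (0 : Fin 2) A + Finsupp.single (1 : Fin 2) c)
          (pcompMv (f ^ k) F) := by
    rw [coeff_pcompMv _ _ hF0 _ (le_trans (le_of_eq hwt) hM)]
    exact Finset.sum_congr rfl fun m _ => rfl
  rw [hL, pcompMv_pow _ _ hF0, hlog, add_pow, map_sum]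
  apply Finset.sum_congr rfl
  intro q _
  have hX0 : MvPowerSeries.constantCoeff (σ := Fin 2) (R := ℂ) (MvPowerSeries.X 0) = 0 := by simp
  have hX1 : MvPowerSeries.constantCoeff (σ := Fin 2) (R := ℂ) (MvPowerSeries.X 1) = 0 := by simp
  rw [toMv_eq, toMv_eq, ← pcompMv_pow _ _ hX0, ← pcompMv_pow _ _ hX1, ← toMv_eq, ← toMv_eq]
  rw [← map_natCast (MvPowerSeries.C (σ := Fin 2) (R := ℂ)) (k.choose q), MvPowerSeries.coeff_mul_C,
    cross_coeff]
  ring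

lemma conv_sum (φ ψ : PowerSeries ℂ) (B : ℕ) :
    ∑ n ∈ range (B + 1), PowerSeries.coeff (R := ℂ) n φ * PowerSeries.coeff (R := ℂ) (B - n) ψ
      = PowerSeries.coeff (R := ℂ) B (φ * ψ) := by
  rw [PowerSeries.coeff_mul, Finset.Nat.sum_antidiagonal_eq_sum_range_succ_mk]

lemma fact_ne (n : ℕ) : (n.factorial : ℂ) ≠ 0 :=
  Nat.cast_ne_zero.mpr (Nat.factorial_ne_zero n)

lemma choose_frac_eq {q j i : ℕ} (hq : q ≤ j) :
    (j.choose q : ℂ) / (j.factorial * i.factorial)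
      = ((q + i).choose q : ℂ) / ((q + i).factorial * (j - q).factorial) := by
  have e1 : ((j.choose q : ℕ) : ℂ) * q.factorial * (j - q).factorial = j.factorial := by
    exact_mod_cast congrArg (Nat.cast (R := ℂ)) (Nat.choose_mul_factorial_mul_factorial hq)
  have e2 : (((q + i).choose q : ℕ) : ℂ) * q.factorial * i.factorial = (q + i).factorial := by
    have := Nat.choose_mul_factorial_mul_factorial (Nat.le_add_right q i)
    rw [Nat.add_sub_cancel_left] at this
    exact_mod_cast congrArg (Nat.cast (R := ℂ)) this
  have hq0 : (q.factorial : ℂ) ≠ 0 := fact_ne q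
  rw [div_eq_div_iff (by exact mul_ne_zero (fact_ne j) (fact_ne i))
    (by exact mul_ne_zero (fact_ne (q+i)) (fact_ne (j-q)))]
  apply mul_left_cancel₀ hq0
  linear_combination (((q+i).choose q : ℂ) * i.factorial * q.factorial) * e1
    - ((j.choose q : ℂ) * ((j-q).factorial : ℂ) * q.factorial) * e2

lemma scalar_key {F : MvPowerSeries (Fin 2) ℂ} {f : PowerSeries ℂ}
    (hF0 : MvPowerSeries.constantCoeff (σ := Fin 2) (R := ℂ) F = 0)
    (hf0 : PowerSeries.constantCoeff (R := ℂ) f = 0)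
    (hlog : pcompMv f F = toMv 0 f + toMv 1 f)
    (A B j i : ℕ) :
    ∑ m ∈ range (A + B + 1), ∑ n ∈ range (B + 1),
        gam F m A (B - n) * (PowerSeries.coeff (R := ℂ) m (f ^ j) / j.factorial
          * (PowerSeries.coeff (R := ℂ) n (f ^ i) / i.factorial))
      = ∑ q ∈ range (B + 1), (if q ≤ j then
          PowerSeries.coeff (R := ℂ) B (f ^ (q + i)) / (q + i).factorial * ((q + i).choose q : ℂ)
            * (PowerSeries.coeff (R := ℂ) A (f ^ (j - q)) / (j - q).factorial) else 0) := by
  have step1 : ∑ m ∈ range (A + B + 1), ∑ n ∈ range (B + 1),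
        gam F m A (B - n) * (PowerSeries.coeff (R := ℂ) m (f ^ j) / j.factorial
          * (PowerSeries.coeff (R := ℂ) n (f ^ i) / i.factorial))
      = ∑ q ∈ range (j + 1), (j.choose q : ℂ) * PowerSeries.coeff (R := ℂ) A (f ^ q)
          * PowerSeries.coeff (R := ℂ) B (f ^ i * f ^ (j - q)) / (j.factorial * i.factorial) := by
    rw [Finset.sum_comm]
    have inner : ∀ n ∈ range (B + 1),
        ∑ m ∈ range (A + B + 1), gam F m A (B - n) * (PowerSeries.coeff (R := ℂ) m (f ^ j) / j.factorial
          * (PowerSeries.coeff (R := ℂ) n (f ^ i) / i.factorial))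
        = ∑ q ∈ range (j + 1), (PowerSeries.coeff (R := ℂ) n (f ^ i) / (j.factorial * i.factorial))
            * ((j.choose q : ℂ) * PowerSeries.coeff (R := ℂ) A (f ^ q)
              * PowerSeries.coeff (R := ℂ) (B - n) (f ^ (j - q))) := by
      intro n _
      have h1 : ∑ m ∈ range (A + B + 1), gam F m A (B - n)
            * (PowerSeries.coeff (R := ℂ) m (f ^ j) / j.factorial
              * (PowerSeries.coeff (R := ℂ) n (f ^ i) / i.factorial))
          = (PowerSeries.coeff (R := ℂ) n (f ^ i) / (j.factorial * i.factorial))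
            * ∑ m ∈ range (A + B + 1), PowerSeries.coeff (R := ℂ) m (f ^ j) * gam F m A (B - n) := by
        rw [Finset.mul_sum]
        apply Finset.sum_congr rfl
        intro m _
        field_simp
      rw [h1, star hF0 hlog j A (B - n) (by omega), Finset.mul_sum]
    rw [Finset.sum_congr rfl inner, Finset.sum_comm]
    apply Finset.sum_congr rfl
    intro q _
    have h2 : ∀ n ∈ range (B + 1),
        PowerSeries.coeff (R := ℂ) n (f ^ i) / (j.factorial * i.factorial)
            * ((j.choose q : ℂ) * PowerSeries.coeff (R := ℂ) A (f ^ q)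
              * PowerSeries.coeff (R := ℂ) (B - n) (f ^ (j - q)))
        = ((j.choose q : ℂ) * PowerSeries.coeff (R := ℂ) A (f ^ q) / (j.factorial * i.factorial))
            * (PowerSeries.coeff (R := ℂ) n (f ^ i) * PowerSeries.coeff (R := ℂ) (B - n) (f ^ (j - q))) := by
      intro n _
      ring
    rw [Finset.sum_congr rfl h2, ← Finset.mul_sum, conv_sum]
    ring
  rw [step1, ← Finset.sum_range_reflect]
  have step2 : ∀ q ∈ range (j + 1),
      (j.choose (j + 1 - 1 - q) : ℂ) * PowerSeries.coeff (R := ℂ) A (f ^ (j + 1 - 1 - q))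
          * PowerSeries.coeff (R := ℂ) B (f ^ i * f ^ (j - (j + 1 - 1 - q)))
          / (j.factorial * i.factorial)
      = (if q ≤ j then
          PowerSeries.coeff (R := ℂ) B (f ^ (q + i)) / (q + i).factorial * ((q + i).choose q : ℂ)
            * (PowerSeries.coeff (R := ℂ) A (f ^ (j - q)) / (j - q).factorial) else 0) := by
    intro q hq
    rw [mem_range] at hq
    have hqj : q ≤ j := by omega
    rw [if_pos hqj]
    have h3 : j + 1 - 1 - q = j - q := by omega
    have h4 : j - (j - q) = q := by omega
    rw [h3, h4, Nat.choose_symm hqj]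
    rw [← pow_add f i q]
    have h5 : i + q = q + i := by omega
    rw [h5]
    have := choose_frac_eq (i := i) hqj
    calc (j.choose q : ℂ) * PowerSeries.coeff (R := ℂ) A (f ^ (j - q))
          * PowerSeries.coeff (R := ℂ) B (f ^ (q + i)) / (j.factorial * i.factorial)
        = ((j.choose q : ℂ) / (j.factorial * i.factorial)) * (PowerSeries.coeff (R := ℂ) A (f ^ (j - q))
          * PowerSeries.coeff (R := ℂ) B (f ^ (q + i))) := by ring
      _ = (((q + i).choose q : ℂ) / ((q + i).factorial * (j - q).factorial))
            * (PowerSeries.coeff (R := ℂ) A (f ^ (j - q)) * PowerSeries.coeff (R := ℂ) B (f ^ (q + i))) := by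
          rw [this]
      _ = _ := by ring
  rw [Finset.sum_congr rfl step2]
  -- now both sides are sums of the same if-term over different ranges
  have ext1 : ∑ q ∈ range (j + 1), (if q ≤ j then
          PowerSeries.coeff (R := ℂ) B (f ^ (q + i)) / (q + i).factorial * ((q + i).choose q : ℂ)
            * (PowerSeries.coeff (R := ℂ) A (f ^ (j - q)) / (j - q).factorial) else 0)
      = ∑ q ∈ range (j + B + 2), (if q ≤ j then
          PowerSeries.coeff (R := ℂ) B (f ^ (q + i)) / (q + i).factorial * ((q + i).choose q : ℂ)
            * (PowerSeries.coeff (R := ℂ) A (f ^ (j - q)) / (j - q).factorial) else 0) := by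
    apply Finset.sum_subset
    · intro x hx; rw [mem_range] at *; omega
    · intro q _ hq
      rw [mem_range] at hq
      rw [if_neg (by omega)]
  have ext2 : ∑ q ∈ range (B + 1), (if q ≤ j then
          PowerSeries.coeff (R := ℂ) B (f ^ (q + i)) / (q + i).factorial * ((q + i).choose q : ℂ)
            * (PowerSeries.coeff (R := ℂ) A (f ^ (j - q)) / (j - q).factorial) else 0)
      = ∑ q ∈ range (j + B + 2), (if q ≤ j then
          PowerSeries.coeff (R := ℂ) B (f ^ (q + i)) / (q + i).factorial * ((q + i).choose q : ℂ)
            * (PowerSeries.coeff (R := ℂ) A (f ^ (j - q)) / (j - q).factorial) else 0) := by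
    apply Finset.sum_subset
    · intro x hx; rw [mem_range] at *; omega
    · intro q _ hq
      rw [mem_range] at hq
      split_ifs with h
      · rw [coeff_fpow_zero hf0 (by omega)]
        simp
      · rfl
  rw [ext1, ← ext2]

end VFAaux3

namespace VFAaux4
open Finset VFAaux VFAaux2 VFAaux3

lemma sum_shift {M : Type*} [AddCommMonoid M] (g : ℕ → M) (q N : ℕ)
    (h1 : ∀ k, k < q → g k = 0) (h2 : ∀ k, N < k → g k = 0) :
    ∑ k ∈ range (N + 1), g k = ∑ i ∈ range (N + 1), g (q + i) := by
  have himg : ∑ i ∈ range (N + 1), g (q + i) = ∑ k ∈ (range (N + 1)).image (q + ·), g k := by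
    rw [Finset.sum_image (by intro x _ y _ h; simp only at h; omega)]
  rw [himg]
  rw [show ∑ k ∈ range (N + 1), g k = ∑ k ∈ range (q + N + 1), g k from
    Finset.sum_subset (by intro x hx; rw [mem_range] at *; omega)
      (fun k _ hk => h2 k (by rw [mem_range] at hk; omega))]
  apply (Finset.sum_subset _ _).symm
  · intro x hx
    simp only [mem_image, mem_range] at hx
    obtain ⟨i, hi, rfl⟩ := hx
    rw [mem_range]; omega
  · intro k hk hnk
    rw [mem_range] at hk
    by_cases hq : k < q
    · exact h1 k hq
    · exfalso; apply hnk
      simp only [mem_image, mem_range]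
      exact ⟨k - q, by omega, by omega⟩

variable {S : Type*} [Ring S] [Algebra ℂ S] (D : S →ₗ[ℂ] S)

/-- The coefficient `e^{f(x)D}u` coefficient function. -/
def ec (f : PowerSeries ℂ) (u : S) (n : ℕ) : S :=
  ∑ k ∈ range (n + 1), ((PowerSeries.coeff (R := ℂ) n (f ^ k)) / (Nat.factorial k : ℂ)) • (⇑D)^[k] u

lemma ec_ext {f : PowerSeries ℂ} (hf0 : PowerSeries.constantCoeff (R := ℂ) f = 0) (u : S) (n N : ℕ)
    (hN : n ≤ N) :
    ec D f u n
      = ∑ k ∈ range (N + 1), ((PowerSeries.coeff (R := ℂ) n (f ^ k)) / (Nat.factorial k : ℂ)) • (⇑D)^[k] u := by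
  apply Finset.sum_subset (by intro x hx; rw [mem_range] at *; omega)
  intro k _ hk
  rw [mem_range] at hk
  rw [coeff_fpow_zero hf0 (by omega), zero_div, zero_smul]

lemma iterD_smul (k : ℕ) (c : ℂ) (x : S) : (⇑D)^[k] (c • x) = c • (⇑D)^[k] x := by
  rw [← Module.End.pow_apply, ← Module.End.pow_apply, map_smul]

lemma iterD_sum (k : ℕ) {ι : Type*} (s : Finset ι) (g : ι → S) :
    (⇑D)^[k] (∑ i ∈ s, g i) = ∑ i ∈ s, (⇑D)^[k] (g i) := by
  rw [← Module.End.pow_apply, map_sum]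
  exact Finset.sum_congr rfl fun i _ => by rw [Module.End.pow_apply]

lemma iterD_mul (hD : ∀ a b : S, D (a * b) = D a * b + a * D b) (k : ℕ) (a b : S) :
    (⇑D)^[k] (a * b)
      = ∑ q ∈ range (k + 1), ((k.choose q : ℂ)) • ((⇑D)^[q] a * (⇑D)^[k - q] b) := by
  induction k with
  | zero => simp
  | succ k ih =>
    rw [Function.iterate_succ_apply', ih, map_sum]
    have hterm : ∀ q ∈ range (k + 1),
        D (((k.choose q : ℂ)) • ((⇑D)^[q] a * (⇑D)^[k - q] b))
        = ((k.choose q : ℂ)) • ((⇑D)^[q + 1] a * (⇑D)^[k - q] b)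
          + ((k.choose q : ℂ)) • ((⇑D)^[q] a * (⇑D)^[(k + 1) - q] b) := by
      intro q hq
      rw [mem_range] at hq
      rw [map_smul, hD, smul_add]
      congr 2
      · rw [Function.iterate_succ_apply']
      · rw [show (k + 1) - q = (k - q) + 1 by omega, Function.iterate_succ_apply']
    rw [Finset.sum_congr rfl hterm, Finset.sum_add_distrib]
    have hgoal : ∑ q ∈ range (k + 1 + 1), (((k+1).choose q : ℂ)) • ((⇑D)^[q] a * (⇑D)^[(k+1) - q] b)
        = (∑ q ∈ range (k + 1), ((k.choose q : ℂ)) • ((⇑D)^[q + 1] a * (⇑D)^[k - q] b))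
          + ∑ q ∈ range (k + 1), ((k.choose q : ℂ)) • ((⇑D)^[q] a * (⇑D)^[(k + 1) - q] b) := by
      rw [Finset.sum_range_succ' (fun q => (((k+1).choose q : ℂ)) • ((⇑D)^[q] a * (⇑D)^[(k+1) - q] b)) (k+1)]
      have hsp : ∀ q ∈ range (k + 1),
          (((k+1).choose (q+1) : ℂ)) • ((⇑D)^[q+1] a * (⇑D)^[(k+1) - (q+1)] b)
          = ((k.choose q : ℂ)) • ((⇑D)^[q + 1] a * (⇑D)^[k - q] b)
            + ((k.choose (q+1) : ℂ)) • ((⇑D)^[q+1] a * (⇑D)^[k - q] b) := by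
        intro q _
        rw [show (k+1) - (q+1) = k - q by omega, Nat.choose_succ_succ]
        push_cast
        rw [add_smul]
      rw [Finset.sum_congr rfl hsp, Finset.sum_add_distrib]
      have hS2 : ∑ q ∈ range (k + 1), ((k.choose q : ℂ)) • ((⇑D)^[q] a * (⇑D)^[(k + 1) - q] b)
          = (∑ q ∈ range (k + 1), ((k.choose (q+1) : ℂ)) • ((⇑D)^[q+1] a * (⇑D)^[k - q] b))
            + (((k+1).choose 0 : ℂ)) • ((⇑D)^[0] a * (⇑D)^[(k+1) - 0] b) := by
        have : ∑ q ∈ range (k + 1 + 1), ((k.choose q : ℂ)) • ((⇑D)^[q] a * (⇑D)^[(k + 1) - q] b)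
            = (∑ q ∈ range (k + 1), ((k.choose (q+1) : ℂ)) • ((⇑D)^[q+1] a * (⇑D)^[(k+1) - (q+1)] b))
              + ((k.choose 0 : ℂ)) • ((⇑D)^[0] a * (⇑D)^[(k+1) - 0] b) :=
          Finset.sum_range_succ' _ (k+1)
        rw [Finset.sum_range_succ] at this
        rw [Nat.choose_succ_self] at this
        push_cast at this
        rw [zero_smul, add_zero] at this
        rw [this]
        norm_num
      rw [hS2]
      abel
    rw [hgoal]

lemma iterD_ec {f : PowerSeries ℂ} (u : S) (A q : ℕ) :
    (⇑D)^[q] (ec D f u A)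
      = ∑ p ∈ range (A + 1), ((PowerSeries.coeff (R := ℂ) A (f ^ p)) / (Nat.factorial p : ℂ)) • (⇑D)^[q + p] u := by
  rw [ec, iterD_sum]
  apply Finset.sum_congr rfl
  intro p _
  rw [iterD_smul, ← Function.iterate_add_apply]

end VFAaux4

namespace VFAaux5
open Finset VFAaux VFAaux2 VFAaux3 VFAaux4

lemma sum_comm4 {α : Type*} [AddCommMonoid α] (s1 s2 s3 s4 : Finset ℕ)
    (g : ℕ → ℕ → ℕ → ℕ → α) :
    ∑ m ∈ s1, ∑ n ∈ s2, ∑ j ∈ s3, ∑ i ∈ s4, g m n j i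
      = ∑ j ∈ s3, ∑ i ∈ s4, ∑ m ∈ s1, ∑ n ∈ s2, g m n j i :=
  calc ∑ m ∈ s1, ∑ n ∈ s2, ∑ j ∈ s3, ∑ i ∈ s4, g m n j i
      = ∑ m ∈ s1, ∑ j ∈ s3, ∑ n ∈ s2, ∑ i ∈ s4, g m n j i :=
        Finset.sum_congr rfl fun m _ => Finset.sum_comm
    _ = ∑ j ∈ s3, ∑ m ∈ s1, ∑ n ∈ s2, ∑ i ∈ s4, g m n j i := Finset.sum_comm
    _ = ∑ j ∈ s3, ∑ m ∈ s1, ∑ i ∈ s4, ∑ n ∈ s2, g m n j i :=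
        Finset.sum_congr rfl fun j _ => Finset.sum_congr rfl fun m _ => Finset.sum_comm
    _ = ∑ j ∈ s3, ∑ i ∈ s4, ∑ m ∈ s1, ∑ n ∈ s2, g m n j i :=
        Finset.sum_congr rfl fun j _ => Finset.sum_comm

lemma sum_comm3 {α : Type*} [AddCommMonoid α] (s1 s2 s3 : Finset ℕ)
    (g : ℕ → ℕ → ℕ → α) :
    ∑ q ∈ s1, ∑ i ∈ s2, ∑ j ∈ s3, g q i j
      = ∑ j ∈ s3, ∑ i ∈ s2, ∑ q ∈ s1, g q i j :=
  calc ∑ q ∈ s1, ∑ i ∈ s2, ∑ j ∈ s3, g q i j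
      = ∑ q ∈ s1, ∑ j ∈ s3, ∑ i ∈ s2, g q i j :=
        Finset.sum_congr rfl fun q _ => Finset.sum_comm
    _ = ∑ j ∈ s3, ∑ q ∈ s1, ∑ i ∈ s2, g q i j := Finset.sum_comm
    _ = ∑ j ∈ s3, ∑ i ∈ s2, ∑ q ∈ s1, g q i j :=
        Finset.sum_congr rfl fun j _ => Finset.sum_comm

variable {S : Type*} [Ring S] [Algebra ℂ S]

lemma assoc_main (D : S →ₗ[ℂ] S) (hD : ∀ a b : S, D (a * b) = D a * b + a * D b)
    {F : MvPowerSeries (Fin 2) ℂ} {f : PowerSeries ℂ}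
    (hF0 : MvPowerSeries.constantCoeff (σ := Fin 2) (R := ℂ) F = 0)
    (hf0 : PowerSeries.constantCoeff (R := ℂ) f = 0)
    (hlog : pcompMv f F = toMv 0 f + toMv 1 f)
    (u v w : S) (A B : ℕ) :
    ∑ m ∈ range (A + B + 1), ∑ n ∈ range (B + 1),
        gam F m A (B - n) • (ec D f u m * (ec D f v n * w))
      = ec D f (ec D f u A * v) B * w := by
  -- LHS expansion
  have exp1 : ∀ m ∈ range (A + B + 1), ∀ n ∈ range (B + 1),
      gam F m A (B - n) • (ec D f u m * (ec D f v n * w))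
      = ∑ j ∈ range (A + B + 1), ∑ i ∈ range (B + 1),
          (gam F m A (B - n) * (PowerSeries.coeff (R := ℂ) m (f ^ j) / (j.factorial : ℂ)
            * (PowerSeries.coeff (R := ℂ) n (f ^ i) / (i.factorial : ℂ))))
            • ((⇑D)^[j] u * ((⇑D)^[i] v * w)) := by
    intro m hm n hn
    rw [mem_range] at hm hn
    rw [ec_ext D hf0 u m (A + B) (by omega), ec_ext D hf0 v n B (by omega)]
    simp only [Finset.sum_mul, Finset.mul_sum, Finset.smul_sum, smul_mul_assoc, mul_smul_comm,
      smul_smul, mul_assoc]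
    rw [Finset.sum_comm]
    apply Finset.sum_congr rfl
    intro j _
    apply Finset.sum_congr rfl
    intro i _
    congr 1
    ring
  rw [Finset.sum_congr rfl (fun m hm => Finset.sum_congr rfl (fun n hn => exp1 m hm n hn))]
  rw [sum_comm4]
  have exp2 : ∀ j ∈ range (A + B + 1), ∀ i ∈ range (B + 1),
      ∑ m ∈ range (A + B + 1), ∑ n ∈ range (B + 1),
          (gam F m A (B - n) * (PowerSeries.coeff (R := ℂ) m (f ^ j) / (j.factorial : ℂ)
            * (PowerSeries.coeff (R := ℂ) n (f ^ i) / (i.factorial : ℂ))))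
            • ((⇑D)^[j] u * ((⇑D)^[i] v * w))
      = ∑ q ∈ range (B + 1), (if q ≤ j then
          (PowerSeries.coeff (R := ℂ) B (f ^ (q + i)) / ((q + i).factorial : ℂ)
            * (((q + i).choose q : ℂ))
            * (PowerSeries.coeff (R := ℂ) A (f ^ (j - q)) / ((j - q).factorial : ℂ)))
            • ((⇑D)^[j] u * ((⇑D)^[i] v * w)) else 0) := by
    intro j _ i _
    have hfold : ∑ m ∈ range (A + B + 1), ∑ n ∈ range (B + 1),
          (gam F m A (B - n) * (PowerSeries.coeff (R := ℂ) m (f ^ j) / (j.factorial : ℂ)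
            * (PowerSeries.coeff (R := ℂ) n (f ^ i) / (i.factorial : ℂ))))
            • ((⇑D)^[j] u * ((⇑D)^[i] v * w))
        = (∑ m ∈ range (A + B + 1), ∑ n ∈ range (B + 1),
            gam F m A (B - n) * (PowerSeries.coeff (R := ℂ) m (f ^ j) / (j.factorial : ℂ)
              * (PowerSeries.coeff (R := ℂ) n (f ^ i) / (i.factorial : ℂ))))
            • ((⇑D)^[j] u * ((⇑D)^[i] v * w)) := by
      rw [Finset.sum_smul]
      exact Finset.sum_congr rfl fun m _ => by rw [Finset.sum_smul]
    rw [hfold, scalar_key hF0 hf0 hlog A B j i, Finset.sum_smul]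
    exact Finset.sum_congr rfl fun q _ => by rw [ite_smul, zero_smul]
  rw [Finset.sum_congr rfl (fun j hj => Finset.sum_congr rfl (fun i hi => exp2 j hj i hi))]
  -- RHS expansion
  have rhs1 : ec D f (ec D f u A * v) B * w
      = ∑ k ∈ range (B + 1), ∑ q ∈ range (k + 1), ∑ p ∈ range (A + 1),
          (PowerSeries.coeff (R := ℂ) B (f ^ k) / (k.factorial : ℂ) * ((k.choose q : ℂ))
            * (PowerSeries.coeff (R := ℂ) A (f ^ p) / (p.factorial : ℂ)))
            • ((⇑D)^[q + p] u * ((⇑D)^[k - q] v * w)) := by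
    rw [ec, Finset.sum_mul]
    apply Finset.sum_congr rfl
    intro k _
    rw [smul_mul_assoc, iterD_mul D hD]
    simp only [iterD_ec, Finset.sum_mul, Finset.mul_sum, Finset.smul_sum, smul_mul_assoc,
      mul_smul_comm, smul_smul, mul_assoc]
  rw [rhs1]
  -- extend q-range
  have rhs2 : ∀ k ∈ range (B + 1),
      ∑ q ∈ range (k + 1), ∑ p ∈ range (A + 1),
          (PowerSeries.coeff (R := ℂ) B (f ^ k) / (k.factorial : ℂ) * ((k.choose q : ℂ))
            * (PowerSeries.coeff (R := ℂ) A (f ^ p) / (p.factorial : ℂ)))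
            • ((⇑D)^[q + p] u * ((⇑D)^[k - q] v * w))
      = ∑ q ∈ range (B + 1), ∑ p ∈ range (A + 1),
          (PowerSeries.coeff (R := ℂ) B (f ^ k) / (k.factorial : ℂ) * ((k.choose q : ℂ))
            * (PowerSeries.coeff (R := ℂ) A (f ^ p) / (p.factorial : ℂ)))
            • ((⇑D)^[q + p] u * ((⇑D)^[k - q] v * w)) := by
    intro k hk
    rw [mem_range] at hk
    apply Finset.sum_subset (by intro x hx; rw [mem_range] at *; omega)
    intro q _ hq
    rw [mem_range] at hq
    apply Finset.sum_eq_zero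
    intro p _
    rw [Nat.choose_eq_zero_of_lt (by omega)]
    push_cast
    rw [mul_zero, zero_mul, zero_smul]
  conv_rhs => rw [Finset.sum_congr rfl rhs2, Finset.sum_comm]
  -- shift k = q + i
  have rhs3 : ∀ q ∈ range (B + 1),
      ∑ k ∈ range (B + 1), ∑ p ∈ range (A + 1),
          (PowerSeries.coeff (R := ℂ) B (f ^ k) / (k.factorial : ℂ) * ((k.choose q : ℂ))
            * (PowerSeries.coeff (R := ℂ) A (f ^ p) / (p.factorial : ℂ)))
            • ((⇑D)^[q + p] u * ((⇑D)^[k - q] v * w))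
      = ∑ i ∈ range (B + 1), ∑ p ∈ range (A + 1),
          (PowerSeries.coeff (R := ℂ) B (f ^ (q + i)) / ((q + i).factorial : ℂ) * (((q + i).choose q : ℂ))
            * (PowerSeries.coeff (R := ℂ) A (f ^ p) / (p.factorial : ℂ)))
            • ((⇑D)^[q + p] u * ((⇑D)^[i] v * w)) := by
    intro q _
    rw [sum_shift _ q B]
    · apply Finset.sum_congr rfl
      intro i _
      have : q + i - q = i := by omega
      rw [this]
    · intro k hkq
      apply Finset.sum_eq_zero
      intro p _
      rw [Nat.choose_eq_zero_of_lt (by omega)]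
      push_cast
      rw [mul_zero, zero_mul, zero_smul]
    · intro k hk
      apply Finset.sum_eq_zero
      intro p _
      rw [coeff_fpow_zero hf0 (by omega), zero_div, zero_mul, zero_mul, zero_smul]
  conv_rhs => rw [Finset.sum_congr rfl rhs3]
  -- extend p-range and shift j = q + p
  have rhs4 : ∀ q ∈ range (B + 1), ∀ i ∈ range (B + 1),
      ∑ p ∈ range (A + 1),
          (PowerSeries.coeff (R := ℂ) B (f ^ (q + i)) / ((q + i).factorial : ℂ) * (((q + i).choose q : ℂ))
            * (PowerSeries.coeff (R := ℂ) A (f ^ p) / (p.factorial : ℂ)))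
            • ((⇑D)^[q + p] u * ((⇑D)^[i] v * w))
      = ∑ j ∈ range (A + B + 1), (if q ≤ j then
          (PowerSeries.coeff (R := ℂ) B (f ^ (q + i)) / ((q + i).factorial : ℂ)
            * (((q + i).choose q : ℂ))
            * (PowerSeries.coeff (R := ℂ) A (f ^ (j - q)) / ((j - q).factorial : ℂ)))
            • ((⇑D)^[j] u * ((⇑D)^[i] v * w)) else 0) := by
    intro q hq i _
    rw [mem_range] at hq
    have hext : ∑ p ∈ range (A + 1),
          (PowerSeries.coeff (R := ℂ) B (f ^ (q + i)) / ((q + i).factorial : ℂ) * (((q + i).choose q : ℂ))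
            * (PowerSeries.coeff (R := ℂ) A (f ^ p) / (p.factorial : ℂ)))
            • ((⇑D)^[q + p] u * ((⇑D)^[i] v * w))
        = ∑ p ∈ range (A + B + 1),
          (PowerSeries.coeff (R := ℂ) B (f ^ (q + i)) / ((q + i).factorial : ℂ) * (((q + i).choose q : ℂ))
            * (PowerSeries.coeff (R := ℂ) A (f ^ p) / (p.factorial : ℂ)))
            • ((⇑D)^[q + p] u * ((⇑D)^[i] v * w)) := by
      apply Finset.sum_subset (by intro x hx; rw [mem_range] at *; omega)
      intro p _ hp
      rw [mem_range] at hp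
      rw [show PowerSeries.coeff (R := ℂ) A (f ^ p) = 0 from coeff_fpow_zero hf0 (by omega),
        zero_div, mul_zero, zero_smul]
    rw [hext, sum_shift (fun j => if q ≤ j then
          (PowerSeries.coeff (R := ℂ) B (f ^ (q + i)) / ((q + i).factorial : ℂ)
            * (((q + i).choose q : ℂ))
            * (PowerSeries.coeff (R := ℂ) A (f ^ (j - q)) / ((j - q).factorial : ℂ)))
            • ((⇑D)^[j] u * ((⇑D)^[i] v * w)) else 0) q (A + B)]
    · apply Finset.sum_congr rfl
      intro p _
      rw [if_pos (by omega)]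
      have : q + p - q = p := by omega
      rw [this]
    · intro k hk
      rw [if_neg (by omega)]
    · intro k hk
      split_ifs with h
      · rw [show PowerSeries.coeff (R := ℂ) A (f ^ (k - q)) = 0 from coeff_fpow_zero hf0 (by omega),
          zero_div, mul_zero, zero_smul]
      · rfl
  conv_rhs => rw [Finset.sum_congr rfl (fun q hq => Finset.sum_congr rfl (fun i hi => rhs4 q hq i hi))]
  rw [sum_comm3]

end VFAaux5

namespace VFAaux6
open Finset VFAaux VFAaux2 VFAaux3

lemma ofPS_coeff_neg {R : Type*} [Semiring R] (φ : PowerSeries R) (z : ℤ) (hz : z < 0) :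
    (HahnSeries.ofPowerSeries ℤ R φ).coeff z = 0 := by
  rw [HahnSeries.ofPowerSeries_apply]
  apply HahnSeries.embDomain_notin_range
  rintro ⟨n, hn⟩
  have hn' : (n : ℤ) = z := hn
  omega

lemma fin2_decomp (p : Fin 2 →₀ ℕ) :
    p = Finsupp.single (0 : Fin 2) (p 0) + Finsupp.single (1 : Fin 2) (p 1) := by
  ext x
  fin_cases x <;> simp [Finsupp.single_apply]

lemma pair_apply0 (a b : ℕ) : (Finsupp.single (0 : Fin 2) a + Finsupp.single (1 : Fin 2) b) 0 = a := by
  simp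
lemma pair_apply1 (a b : ℕ) : (Finsupp.single (0 : Fin 2) a + Finsupp.single (1 : Fin 2) b) 1 = b := by
  simp

lemma FB_coeff (G : MvPowerSeries (Fin 2) ℂ) (j : ℕ) :
    PowerSeries.coeff (R := (LaurentSeries ℂ)) j (FB G)
      = HahnSeries.ofPowerSeries ℤ ℂ (PowerSeries.mk fun i =>
          MvPowerSeries.coeff (R := ℂ) (Finsupp.single (0 : Fin 2) i + Finsupp.single (1 : Fin 2) j) G) := by
  rw [FB, PowerSeries.coeff_mk]

lemma FB_one : FB 1 = 1 := by
  apply PowerSeries.ext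
  intro j
  rw [FB_coeff]
  have : (PowerSeries.mk fun i =>
      MvPowerSeries.coeff (R := ℂ) (Finsupp.single (0 : Fin 2) i + Finsupp.single (1 : Fin 2) j) 1)
      = if j = 0 then 1 else 0 := by
    apply PowerSeries.ext
    intro i
    rw [PowerSeries.coeff_mk, MvPowerSeries.coeff_one]
    by_cases h2 : j = 0
    · subst h2
      rw [if_pos rfl, PowerSeries.coeff_one]
      by_cases h1 : (Finsupp.single (0 : Fin 2) i + Finsupp.single (1 : Fin 2) 0) = 0
      · rw [if_pos h1, if_pos]
        have := congrArg (fun e => e (0 : Fin 2)) h1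
        simp only [Finsupp.add_apply, Finsupp.single_apply] at this
        simp at this
        omega
      · rw [if_neg h1, if_neg]
        intro hi
        apply h1
        rw [hi]
        simp
    · rw [if_neg h2, if_neg]
      · simp
      · intro h1
        apply h2
        have := congrArg (fun e => e (1 : Fin 2)) h1
        simp at this
        omega
  rw [this]
  split_ifs with h
  · subst h; simp
  · simp [PowerSeries.coeff_one, h]

lemma FB_mul (G H : MvPowerSeries (Fin 2) ℂ) : FB (G * H) = FB G * FB H := by
  apply PowerSeries.ext
  intro j
  rw [PowerSeries.coeff_mul, FB_coeff]
  have hstep : ∀ p ∈ antidiagonal j,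
      PowerSeries.coeff (R := (LaurentSeries ℂ)) p.1 (FB G) * PowerSeries.coeff (R := (LaurentSeries ℂ)) p.2 (FB H)
      = HahnSeries.ofPowerSeries ℤ ℂ
          ((PowerSeries.mk fun i =>
            MvPowerSeries.coeff (R := ℂ) (Finsupp.single (0 : Fin 2) i + Finsupp.single (1 : Fin 2) p.1) G)
          * (PowerSeries.mk fun i =>
            MvPowerSeries.coeff (R := ℂ) (Finsupp.single (0 : Fin 2) i + Finsupp.single (1 : Fin 2) p.2) H)) := by
    intro p _
    rw [FB_coeff, FB_coeff, map_mul]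
  rw [Finset.sum_congr rfl hstep, ← map_sum]
  apply congrArg
  apply PowerSeries.ext
  intro i
  rw [PowerSeries.coeff_mk, map_sum, MvPowerSeries.coeff_mul]
  have hterm : ∀ p ∈ antidiagonal j,
      PowerSeries.coeff (R := ℂ) i ((PowerSeries.mk fun i' =>
          MvPowerSeries.coeff (R := ℂ) (Finsupp.single (0 : Fin 2) i' + Finsupp.single (1 : Fin 2) p.1) G)
        * (PowerSeries.mk fun i' =>
          MvPowerSeries.coeff (R := ℂ) (Finsupp.single (0 : Fin 2) i' + Finsupp.single (1 : Fin 2) p.2) H))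
      = ∑ r ∈ antidiagonal i,
          MvPowerSeries.coeff (R := ℂ) (Finsupp.single (0 : Fin 2) r.1 + Finsupp.single (1 : Fin 2) p.1) G
          * MvPowerSeries.coeff (R := ℂ) (Finsupp.single (0 : Fin 2) r.2 + Finsupp.single (1 : Fin 2) p.2) H := by
    intro p _
    rw [PowerSeries.coeff_mul]
    exact Finset.sum_congr rfl fun r _ => by rw [PowerSeries.coeff_mk, PowerSeries.coeff_mk]
  rw [Finset.sum_congr rfl hterm, ← Finset.sum_product']
  apply Finset.sum_nbij'
    (i := fun P : (Fin 2 →₀ ℕ) × (Fin 2 →₀ ℕ) => ((P.1 1, P.2 1), (P.1 0, P.2 0)))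
    (j := fun z => (Finsupp.single (0 : Fin 2) z.2.1 + Finsupp.single (1 : Fin 2) z.1.1,
      Finsupp.single (0 : Fin 2) z.2.2 + Finsupp.single (1 : Fin 2) z.1.2))
  · intro P hP
    rw [Finset.HasAntidiagonal.mem_antidiagonal] at hP
    simp only [Finset.mem_product, Finset.HasAntidiagonal.mem_antidiagonal]
    constructor
    · have := congrArg (fun e => e (1 : Fin 2)) hP
      simpa [pair_apply1] using this
    · have := congrArg (fun e => e (0 : Fin 2)) hP
      simpa [pair_apply0] using this
  · intro z hz
    simp only [Finset.mem_product, Finset.HasAntidiagonal.mem_antidiagonal] at hz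
    rw [Finset.HasAntidiagonal.mem_antidiagonal]
    have h1 := hz.1
    have h2 := hz.2
    ext x
    fin_cases x <;> simp [Finsupp.single_apply] <;> omega
  · intro P _
    dsimp only
    rw [← fin2_decomp P.1, ← fin2_decomp P.2]
  · intro z _
    simp only [pair_apply0, pair_apply1]
  · intro P _
    dsimp only
    rw [← fin2_decomp P.1, ← fin2_decomp P.2]

lemma FB_pow (G : MvPowerSeries (Fin 2) ℂ) (m : ℕ) : FB (G ^ m) = FB G ^ m := by
  induction m with
  | zero => simpa using FB_one
  | succ m ih => rw [pow_succ, pow_succ, FB_mul, ih]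

lemma FzC_nat (F : MvPowerSeries (Fin 2) ℂ) (m c : ℕ) (a : ℤ) :
    FzC F (m : ℤ) a (c : ℤ) = if 0 ≤ a then gam F m a.toNat c else 0 := by
  rw [FzC, if_pos (by exact_mod_cast Nat.zero_le c)]
  rw [Fzp, if_pos (by exact_mod_cast Nat.zero_le m)]
  rw [Int.toNat_natCast, Int.toNat_natCast, ← FB_pow, FB_coeff]
  by_cases ha : 0 ≤ a
  · rw [if_pos ha]
    rw [show a = ((a.toNat : ℕ) : ℤ) from (Int.toNat_of_nonneg ha).symm]
    rw [HahnSeries.ofPowerSeries_apply_coeff, PowerSeries.coeff_mk]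
    rfl
  · rw [if_neg ha, ofPS_coeff_neg _ _ (by omega)]

lemma FzC_zero (F : MvPowerSeries (Fin 2) ℂ) (a c : ℤ) :
    FzC F 0 a c = if a = 0 ∧ c = 0 then 1 else 0 := by
  rw [FzC]
  by_cases hc : 0 ≤ c
  · rw [if_pos hc, Fzp, if_pos le_rfl]
    norm_num
    by_cases hc0 : c ≤ 0
    · rw [if_pos hc0, HahnSeries.coeff_one]
      by_cases ha : a = 0
      · rw [if_pos ha, if_pos ⟨ha, by omega⟩]
      · rw [if_neg ha, if_neg (by tauto)]
    · rw [if_neg hc0, HahnSeries.coeff_zero, if_neg (by omega)]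
  · rw [if_neg hc, if_neg (by omega)]

lemma FzC_negc (F : MvPowerSeries (Fin 2) ℂ) (k a c : ℤ) (hc : ¬ 0 ≤ c) :
    FzC F k a c = 0 := by rw [FzC, if_neg hc]

end VFAaux6

namespace VFA


-- STATEMENT 18
def YFD {B : Type*} [Ring B] [Algebra ℂ B] (D : B →ₗ[ℂ] B) (f : PowerSeries ℂ) :
    B → B → HahnSeries ℤ B := fun a b =>
  HahnSeries.ofPowerSeries ℤ B (PowerSeries.mk fun n =>
    (∑ k ∈ Finset.range (n + 1),
      ((PowerSeries.coeff (R := ℂ) n (f ^ k)) / (Nat.factorial k : ℂ)) • (⇑D)^[k] a) * b)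

namespace VFAaux7
open Finset VFAaux VFAaux2 VFAaux3 VFAaux4 VFAaux5 VFAaux6

variable {S : Type*} [Ring S] [Algebra ℂ S]

lemma YFD_coeff (D : S →ₗ[ℂ] S) (f : PowerSeries ℂ) (a b : S) (z : ℤ) :
    (YFD D f a b).coeff z = if 0 ≤ z then ec D f a z.toNat * b else 0 := by
  by_cases hz : 0 ≤ z
  · rw [if_pos hz]
    obtain ⟨n, rfl⟩ := Int.eq_ofNat_of_zero_le hz
    show (HahnSeries.ofPowerSeries ℤ S _).coeff (n : ℤ) = _
    rw [HahnSeries.ofPowerSeries_apply_coeff, PowerSeries.coeff_mk]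
    rfl
  · rw [if_neg hz]
    exact ofPS_coeff_neg _ _ (by omega)

lemma iterD_zero (D : S →ₗ[ℂ] S) (k : ℕ) : (⇑D)^[k] (0 : S) = 0 := by
  rw [← Module.End.pow_apply, map_zero]

lemma ec_zero (D : S →ₗ[ℂ] S) (f : PowerSeries ℂ) (n : ℕ) : ec D f 0 n = 0 := by
  rw [ec]
  apply Finset.sum_eq_zero
  intro k _
  rw [iterD_zero, smul_zero]

lemma ec_self (D : S →ₗ[ℂ] S) (f : PowerSeries ℂ) (u : S) : ec D f u 0 = u := by
  rw [ec, Finset.sum_range_one]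
  simp

lemma D_one (D : S →ₗ[ℂ] S) (hD : ∀ a b : S, D (a * b) = D a * b + a * D b) : D 1 = 0 := by
  have h := hD 1 1
  rw [one_mul, mul_one, one_mul] at h
  exact (left_eq_add.mp h)

lemma iterD_one (D : S →ₗ[ℂ] S) (hD : ∀ a b : S, D (a * b) = D a * b + a * D b)
    {k : ℕ} (hk : k ≠ 0) : (⇑D)^[k] (1 : S) = 0 := by
  obtain ⟨k', rfl⟩ : ∃ k', k = k' + 1 := ⟨k - 1, by omega⟩
  rw [Function.iterate_succ_apply, D_one D hD, iterD_zero]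

lemma ec_one (D : S →ₗ[ℂ] S) (hD : ∀ a b : S, D (a * b) = D a * b + a * D b)
    (f : PowerSeries ℂ) (n : ℕ) : ec D f 1 n = if n = 0 then 1 else 0 := by
  rw [ec, Finset.sum_eq_single 0]
  · rw [pow_zero, PowerSeries.coeff_one, Function.iterate_zero_apply]
    split_ifs with h
    · simp
    · simp
  · intro k _ hk
    rw [iterD_one D hD hk, smul_zero]
  · intro h
    simp at h

lemma vacuum_YFD (D : S →ₗ[ℂ] S) (hD : ∀ a b : S, D (a * b) = D a * b + a * D b)
    (f : PowerSeries ℂ) : Vacuum (YFD D f) 1 := by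
  intro v
  apply HahnSeries.coeff_injective
  funext z
  rw [YFD_coeff, HahnSeries.coeff_single]
  by_cases hz : 0 ≤ z
  · rw [if_pos hz, ec_one D hD]
    by_cases hz0 : z = 0
    · rw [if_pos (by omega : z.toNat = 0), if_pos hz0, one_mul]
    · rw [if_neg (by omega : ¬ z.toNat = 0), if_neg hz0, zero_mul]
  · rw [if_neg hz, if_neg (by omega)]

lemma creation_YFD (D : S →ₗ[ℂ] S) (f : PowerSeries ℂ) : Creation (YFD D f) 1 := by
  intro v
  constructor
  · intro n hn
    rw [YFD_coeff, if_neg (by omega)]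
  · rw [YFD_coeff, if_pos le_rfl]
    rw [show (0 : ℤ).toNat = 0 from rfl, ec_self, mul_one]

lemma YFD_right_zero_coeff (D : S →ₗ[ℂ] S) (f : PowerSeries ℂ) (a : S) (z : ℤ) :
    (YFD D f a 0).coeff z = 0 := by
  rw [YFD_coeff]
  split_ifs
  · rw [mul_zero]
  · rfl

lemma YFD_left_zero_coeff (D : S →ₗ[ℂ] S) (f : PowerSeries ℂ) (b : S) (z : ℤ) :
    (YFD D f 0 b).coeff z = 0 := by
  rw [YFD_coeff]
  split_ifs
  · rw [ec_zero, zero_mul]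
  · rfl

lemma weakComm_of_comm (D : S →ₗ[ℂ] S) (f : PowerSeries ℂ)
    (hcomm : ∀ a b : S, a * b = b * a) : WeakComm (YFD D f) := by
  intro u v
  refine ⟨0, fun w a b => ?_⟩
  rw [Finset.sum_range_one, Finset.sum_range_one]
  norm_num
  simp only [YFD_coeff]
  by_cases ha : 0 ≤ a
  · by_cases hb : 0 ≤ b
    · rw [if_pos ha, if_pos hb, if_pos ha, if_pos hb]
      rw [← mul_assoc, hcomm (ec D f u a.toNat) (ec D f v b.toNat), mul_assoc]
    · rw [if_neg hb, if_pos ha, if_neg hb, mul_zero]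
  · by_cases hb : 0 ≤ b
    · rw [if_neg ha, if_pos hb, if_neg ha, mul_zero]
    · rw [if_neg ha, if_neg hb]

lemma comm_of_weakComm (D : S →ₗ[ℂ] S) (f : PowerSeries ℂ)
    (hf0 : PowerSeries.constantCoeff (R := ℂ) f = 0)
    (hw : WeakComm (YFD D f)) : ∀ a b : S, a * b = b * a := by
  intro u v
  obtain ⟨k, hk⟩ := hw u v
  set g : ℤ → ℤ → S := fun m n =>
    (YFD D f u ((YFD D f v 1).coeff n)).coeff m
      - (YFD D f v ((YFD D f u 1).coeff m)).coeff n with hg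
  have hgdef : ∀ m n : ℤ, g m n
      = (YFD D f u ((YFD D f v 1).coeff n)).coeff m
        - (YFD D f v ((YFD D f u 1).coeff m)).coeff n := fun _ _ => rfl
  have hgneg : ∀ m n : ℤ, m < 0 ∨ n < 0 → g m n = 0 := by
    intro m n hmn
    rw [hgdef]
    rcases hmn with h | h
    · rw [show (YFD D f u 1).coeff m = 0 by rw [YFD_coeff, if_neg (by omega)]]
      rw [show (YFD D f u ((YFD D f v 1).coeff n)).coeff m = 0 by
        rw [YFD_coeff, if_neg (by omega)]]
      rw [YFD_right_zero_coeff, sub_zero]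
    · rw [show (YFD D f v 1).coeff n = 0 by rw [YFD_coeff, if_neg (by omega)]]
      rw [show (YFD D f v ((YFD D f u 1).coeff m)).coeff n = 0 by
        rw [YFD_coeff, if_neg (by omega)]]
      rw [YFD_right_zero_coeff, zero_sub, neg_eq_zero]
  have hrel : ∀ a b : ℤ, ∑ i ∈ range (k + 1),
      ((-1 : ℂ) ^ (k - i) * (k.choose i : ℂ)) • g (a - i) (b - (k - i)) = 0 := by
    intro a b
    have := hk 1 a b
    simp only [hgdef, smul_sub]
    rw [Finset.sum_sub_distrib, this, sub_self]
  have hkey : ∀ M : ℕ, ∀ n : ℤ, g (M : ℤ) n = 0 := by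
    intro M
    induction M using Nat.strong_induction_on with
    | _ M ih =>
      intro n
      have h0 := hrel (M : ℤ) (n + k)
      rw [Finset.sum_eq_single_of_mem 0 (by simp)] at h0
      · simp only [Nat.sub_zero, Nat.cast_zero, sub_zero, Nat.choose_zero_right,
          Nat.cast_one, mul_one] at h0
        have hz : (n + (k : ℤ)) - ((k : ℤ)) = n := by ring
        rw [hz] at h0
        have hne : ((-1 : ℂ) ^ k) ≠ 0 := pow_ne_zero _ (by norm_num)
        exact (smul_eq_zero.mp h0).resolve_left hne
      · intro i hi hine
        rw [mem_range] at hi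
        have hi' : (↑(k - i) : ℤ) = (k : ℤ) - i := by
          push_cast [Nat.cast_sub (by omega : i ≤ k)]
          ring
        by_cases hM : (M : ℤ) - i < 0
        · rw [hgneg _ _ (Or.inl hM), smul_zero]
        · have hMi : (M : ℤ) - (i : ℤ) = ((M - i : ℕ) : ℤ) := by
            push_cast [Nat.cast_sub (by omega : i ≤ M)]
            ring
          rw [hMi, ih (M - i) (by omega)]
          rw [smul_zero]
  have h00 := hkey 0 0
  rw [hgdef] at h00
  simp only [Nat.cast_zero] at h00
  have hv1 : (YFD D f v 1).coeff 0 = v := by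
    rw [YFD_coeff, if_pos le_rfl, show (0:ℤ).toNat = 0 from rfl, ec_self, mul_one]
  have hu1 : (YFD D f u 1).coeff 0 = u := by
    rw [YFD_coeff, if_pos le_rfl, show (0:ℤ).toNat = 0 from rfl, ec_self, mul_one]
  rw [hv1, hu1] at h00
  rw [YFD_coeff, if_pos le_rfl, show (0:ℤ).toNat = 0 from rfl, ec_self] at h00
  rw [YFD_coeff, if_pos le_rfl, show (0:ℤ).toNat = 0 from rfl, ec_self] at h00
  exact sub_eq_zero.mp h00

end VFAaux7

namespace VFAaux8
open Finset VFAaux VFAaux2 VFAaux3 VFAaux4 VFAaux5 VFAaux6 VFAaux7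

lemma FzC_eval (F : MvPowerSeries (Fin 2) ℂ) (k a c : ℤ) (hk : 0 ≤ k) (hc : 0 ≤ c) :
    FzC F k a c = if 0 ≤ a then gam F k.toNat a.toNat c.toNat else 0 := by
  obtain ⟨m, rfl⟩ := Int.eq_ofNat_of_zero_le hk
  obtain ⟨c', rfl⟩ := Int.eq_ofNat_of_zero_le hc
  rw [FzC_nat]
  simp

variable {S : Type*} [Ring S] [Algebra ℂ S]

lemma weakFAssoc_YFD (D : S →ₗ[ℂ] S) (hD : ∀ a b : S, D (a * b) = D a * b + a * D b)
    {F : MvPowerSeries (Fin 2) ℂ} {f : PowerSeries ℂ}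
    (hF : IsFGL F) (hf0 : PowerSeries.constantCoeff (R := ℂ) f = 0)
    (hlog : pcompMv f F = toMv 0 f + toMv 1 f) :
    WeakFAssoc F (YFD D f) := by
  have hF0 := constF_zero hF
  intro u v w
  refine ⟨0, fun a b => ?_⟩
  simp only [Nat.cast_zero, zero_add]
  have hR : (∑ᶠ mn : ℤ × ℤ, FzC F 0 (a - mn.1) (b - mn.2) •
      (YFD D f ((YFD D f u v).coeff mn.1) w).coeff mn.2)
      = (YFD D f ((YFD D f u v).coeff a) w).coeff b := by
    rw [finsum_eq_single _ ((a : ℤ), (b : ℤ))]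
    · rw [sub_self, sub_self, FzC_zero, if_pos ⟨rfl, rfl⟩, one_smul]
    · rintro ⟨x, y⟩ hxy
      rw [FzC_zero, if_neg, zero_smul]
      rintro ⟨h1, h2⟩
      apply hxy
      have hx : x = a := by omega
      have hy : y = b := by omega
      rw [Prod.ext_iff]
      exact ⟨hx, hy⟩
  rw [hR]
  by_cases hab : 0 ≤ a ∧ 0 ≤ b
  · obtain ⟨ha, hb⟩ := hab
    obtain ⟨A, rfl⟩ := Int.eq_ofNat_of_zero_le ha
    obtain ⟨B, rfl⟩ := Int.eq_ofNat_of_zero_le hb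
    have hsub : (Function.support fun mn : ℤ × ℤ =>
        FzC F mn.1 (A : ℤ) ((B : ℤ) - mn.2) • (YFD D f u ((YFD D f v w).coeff mn.2)).coeff mn.1)
        ⊆ ((range (A + B + 1) ×ˢ range (B + 1)).image
            (fun p : ℕ × ℕ => ((p.1 : ℤ), (p.2 : ℤ))) : Finset (ℤ × ℤ)) := by
      intro mn hmn
      simp only [Function.mem_support] at hmn
      have h1 : 0 ≤ mn.1 := by
        by_contra h
        apply hmn
        rw [YFD_coeff, if_neg h, smul_zero]
      have h2 : 0 ≤ mn.2 := by
        by_contra h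
        apply hmn
        rw [show (YFD D f v w).coeff mn.2 = 0 by rw [YFD_coeff, if_neg h],
          YFD_right_zero_coeff, smul_zero]
      have h3 : mn.2 ≤ (B : ℤ) := by
        by_contra h
        apply hmn
        rw [FzC_negc _ _ _ _ (by omega), zero_smul]
      have h4 : mn.1 ≤ (A : ℤ) + B := by
        by_contra h
        apply hmn
        rw [FzC_eval F mn.1 (A : ℤ) ((B : ℤ) - mn.2) h1 (by omega), if_pos (by positivity),
          gam_eq_zero hF0 (by simp; omega), zero_smul]
      simp only [Finset.coe_image, Set.mem_image, Finset.mem_coe, Finset.mem_product,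
        Finset.mem_range]
      refine ⟨(mn.1.toNat, mn.2.toNat), ⟨by omega, by omega⟩, ?_⟩
      rw [Prod.ext_iff]
      constructor <;> simp <;> omega
    rw [finsum_eq_finset_sum_of_support_subset _ hsub]
    rw [Finset.sum_image (by
      rintro ⟨p1, p2⟩ _ ⟨q1, q2⟩ _ h
      rw [Prod.ext_iff] at h ⊢
      simp only at h ⊢
      omega)]
    rw [Finset.sum_product]
    have hterm : ∀ m ∈ range (A + B + 1), ∀ n ∈ range (B + 1),
        FzC F ((m : ℕ) : ℤ) (A : ℤ) ((B : ℤ) - ((n : ℕ) : ℤ)) •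
          (YFD D f u ((YFD D f v w).coeff ((n : ℕ) : ℤ))).coeff ((m : ℕ) : ℤ)
        = gam F m A (B - n) • (ec D f u m * (ec D f v n * w)) := by
      intro m _ n hn
      rw [mem_range] at hn
      rw [show ((B : ℤ) - ((n : ℕ) : ℤ)) = (((B - n : ℕ) : ℕ) : ℤ) by
        push_cast [Nat.cast_sub (by omega : n ≤ B)]; ring]
      rw [FzC_nat, if_pos (by positivity)]
      rw [YFD_coeff, if_pos (by positivity), YFD_coeff, if_pos (by positivity)]
      simp only [Int.toNat_natCast]
    rw [Finset.sum_congr rfl (fun m hm => Finset.sum_congr rfl (fun n hn => hterm m hm n hn))]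
    rw [YFD_coeff, if_pos (by positivity), YFD_coeff, if_pos (by positivity)]
    simp only [Int.toNat_natCast]
    exact assoc_main D hD hF0 hf0 hlog u v w A B
  · have hL : (∑ᶠ mn : ℤ × ℤ, FzC F mn.1 a (b - mn.2) •
        (YFD D f u ((YFD D f v w).coeff mn.2)).coeff mn.1) = 0 := by
      apply finsum_eq_zero_of_forall_eq_zero
      intro mn
      by_cases h1 : 0 ≤ mn.1
      · by_cases h2 : 0 ≤ mn.2
        · by_cases h3 : 0 ≤ b - mn.2
          · rw [FzC_eval F mn.1 a (b - mn.2) h1 h3, if_neg (by omega), zero_smul]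
          · rw [FzC_negc _ _ _ _ h3, zero_smul]
        · rw [show (YFD D f v w).coeff mn.2 = 0 by rw [YFD_coeff, if_neg h2],
            YFD_right_zero_coeff, smul_zero]
      · rw [YFD_coeff, if_neg h1, smul_zero]
    rw [hL]
    by_cases ha : 0 ≤ a
    · rw [YFD_coeff, if_neg (by omega)]
    · rw [show (YFD D f u v).coeff a = 0 by rw [YFD_coeff, if_neg ha],
        YFD_left_zero_coeff]

end VFAaux8

theorem statement18 {B : Type*} [Ring B] [Algebra ℂ B] (D : B →ₗ[ℂ] B)
    (hD : ∀ a b : B, D (a * b) = D a * b + a * D b)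
    (F : MvPowerSeries (Fin 2) ℂ) (f : PowerSeries ℂ)
    (hF : IsFGL F) (hf0 : PowerSeries.constantCoeff (R := ℂ) f = 0)
    (hf1 : PowerSeries.coeff (R := ℂ) 1 f = 1) (hlog : pcompMv f F = toMv 0 f + toMv 1 f) :
    Vacuum (YFD D f) 1 ∧ Creation (YFD D f) 1 ∧ WeakFAssoc F (YFD D f) ∧
      (WeakComm (YFD D f) ↔ ∀ a b : B, a * b = b * a) := by
  refine ⟨VFAaux7.vacuum_YFD D hD f, VFAaux7.creation_YFD D f,
    VFAaux8.weakFAssoc_YFD D hD hF hf0 hlog, ?_⟩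
  exact ⟨fun h => VFAaux7.comm_of_weakComm D f hf0 h, fun h => VFAaux7.weakComm_of_comm D f h⟩

end VFA
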